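/- Let F ∈ ℂ^{d×d} be Hermitian positive definite. Then the maximum over Hermitian positive definite Q ∈ ℂ^{d×d} of f(Q) = −tr(Q F) + log det Q + d equals log det(F⁻¹), and is attained at Q = F⁻¹. -/

import Mathlib

open Matrix ComplexOrder

lemma trace_eq_sum_eigs {d : ℕ} {A : Matrix (Fin d) (Fin d) ℂ} (hA : A.IsHermitian) :
    A.trace = ∑ i, (hA.eigenvalues i : ℂ) := by
  conv_lhs => rw [hA.spectral_theorem]
  rw [Unitary.conjStarAlgAut_apply, trace_mul_cycle, (Matrix.mem_unitaryGroup_iff').mp hA.eigenvectorUnitary.2,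
    one_mul, trace_diagonal]
  rfl

lemma posdef_conj {d : ℕ} {S Q : Matrix (Fin d) (Fin d) ℂ} (hQ : Q.PosDef)
    (hS : IsUnit S.det) : (Sᴴ * Q * S).PosDef := by
  exact hQ.conjTranspose_mul_mul_same
    (Matrix.mulVec_injective_iff_isUnit.mpr (isUnit_iff_isUnit_det S |>.2 hS))

lemma key_ineq {d : ℕ} {A : Matrix (Fin d) (Fin d) ℂ} (hA : A.PosDef) :
    -(A.trace.re) + Real.log A.det.re + d ≤ 0 := by
  have htr : A.trace.re = ∑ i, hA.1.eigenvalues i := by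
    rw [trace_eq_sum_eigs hA.1]; simp
  have hdet : A.det.re = ∏ i, hA.1.eigenvalues i := by
    rw [hA.1.det_eq_prod_eigenvalues]
    norm_cast
  have hpos : ∀ i ∈ Finset.univ, hA.1.eigenvalues i ≠ 0 := fun i _ => (hA.eigenvalues_pos i).ne'
  have hlog : Real.log A.det.re = ∑ i, Real.log (hA.1.eigenvalues i) := by
    rw [hdet, Real.log_prod hpos]
  have hsum : ∑ i, Real.log (hA.1.eigenvalues i) ≤ ∑ i, (hA.1.eigenvalues i - 1) :=
    Finset.sum_le_sum fun i _ => Real.log_le_sub_one_of_pos (hA.eigenvalues_pos i)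
  have : ∑ i, (hA.1.eigenvalues i - 1) = (∑ i, hA.1.eigenvalues i) - d := by
    rw [Finset.sum_sub_distrib]; simp
  rw [htr, hlog]
  linarith [hsum, this]

theorem stmt_10 {d : ℕ} (F : Matrix (Fin d) (Fin d) ℂ)
    (hF : F.PosDef) :
    (∀ Q : Matrix (Fin d) (Fin d) ℂ, Q.PosDef →
      -((Q * F).trace.re) + Real.log Q.det.re + d ≤ Real.log (F⁻¹).det.re) ∧
    -(((F⁻¹) * F).trace.re) + Real.log (F⁻¹).det.re + d = Real.log (F⁻¹).det.re := by
  have hdetF : IsUnit F.det := hF.det_pos.ne'.isUnit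
  have hFre : (0:ℝ) < F.det.re ∧ F.det.im = 0 := by
    have := hF.det_pos
    rw [Complex.lt_def] at this
    exact ⟨by simpa using this.1, by simpa using this.2.symm⟩
  have hinvdet : (F⁻¹).det.re = (F.det.re)⁻¹ := by
    rw [Matrix.det_nonsing_inv, Ring.inverse_eq_inv', Complex.inv_def]
    simp [Complex.normSq, Complex.ext_iff, hFre.2]
    field_simp [Complex.normSq_apply, hFre.2]
  have hloginv : Real.log (F⁻¹).det.re = -Real.log F.det.re := by
    rw [hinvdet, Real.log_inv]
  constructor
  · intro Q hQ
    set S := (open scoped MatrixOrder in CFC.sqrt F) with hSdef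
    have hS : S.IsHermitian := open scoped MatrixOrder in (nonneg_iff_posSemidef.mp (CFC.sqrt_nonneg F)).1
    have hSS : S * S = F := open scoped MatrixOrder in
      CFC.sqrt_mul_sqrt_self F (nonneg_iff_posSemidef.mpr hF.posSemidef)
    have hdetS : IsUnit S.det := by
      have : S.det * S.det = F.det := by rw [← det_mul, hSS]
      exact isUnit_of_mul_isUnit_left (this ▸ hdetF)
    have hA : (Sᴴ * Q * S).PosDef := posdef_conj hQ hdetS
    have htrace : (Sᴴ * Q * S).trace = (Q * F).trace := by
      rw [hS.eq, trace_mul_cycle, hSS, trace_mul_comm]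
    have hdetA : (Sᴴ * Q * S).det = Q.det * F.det := by
      rw [det_mul, det_mul, hS.eq, ← hSS, det_mul]; ring
    have hQre : (0:ℝ) < Q.det.re ∧ Q.det.im = 0 := by
      have := hQ.det_pos
      rw [Complex.lt_def] at this
      exact ⟨by simpa using this.1, by simpa using this.2.symm⟩
    have hreA : (Sᴴ * Q * S).det.re = Q.det.re * F.det.re := by
      rw [hdetA, Complex.mul_re, hQre.2, hFre.2]; ring
    have hlogA : Real.log (Sᴴ * Q * S).det.re = Real.log Q.det.re + Real.log F.det.re := by
      rw [hreA, Real.log_mul hQre.1.ne' hFre.1.ne']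
    have := key_ineq hA
    rw [htrace, hlogA] at this
    rw [hloginv]
    linarith
  · have h1 : F⁻¹ * F = 1 := nonsing_inv_mul F hdetF
    rw [h1, trace_one]
    simp
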